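/- Let q ∈ ℂ[[t]] with q(0) = 1 and let φ be normalized and symmetric. Then the following are equivalent: (i) Π₊( ℰ(q,φ)·φ_z ) = 0; (ii) [ S_q(φ⁻,φ) ] = 1; (iii) Π( ℰ(q,φ)·φ_z̄ ) = 0. -/

import Mathlib

/- Common setup: formal power series in two commuting variables `z, z̄` over `ℂ`,
represented by their coefficient functions, together with the operators of
Treschev's linearizable billiard construction. -/

open scoped BigOperators

noncomputable section

namespace Treschev

/-- A formal power series `f = Σ_{j,k≥0} f_{j,k} z^j z̄^k`, given by its coefficients. -/
abbrev FPS : Type := ℕ → ℕ → ℂ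

/-- A formal power series in one variable `t`, given by its coefficients. -/
abbrev OPS : Type := ℕ → ℂ

/-- Product of two formal power series (Cauchy product). -/
def fmul (f g : FPS) : FPS := fun j k =>
  ∑ a ∈ Finset.range (j + 1), ∑ b ∈ Finset.range (k + 1), f a b * g (j - a) (k - b)

/-- The constant series `1`. -/
def oneF : FPS := fun j k => if j = 0 ∧ k = 0 then 1 else 0

/-- Powers of a formal power series. -/
def fpow (f : FPS) : ℕ → FPS
  | 0 => oneF
  | n + 1 => fmul f (fpow f n)

/-- Substitution of a two-variable series `u` with zero constant term into a
one-variable series `q` (the formula is the correct one whenever `u 0 0 = 0`). -/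
def substOne (q : OPS) (u : FPS) : FPS := fun j k =>
  ∑ m ∈ Finset.range (j + k + 1), q m * fpow u m j k

/-- Substitution `F(u, v)` of two series with zero constant term into a two-variable
series `F` (the formula is the correct one whenever `u 0 0 = 0` and `v 0 0 = 0`). -/
def subst2 (F : FPS) (u v : FPS) : FPS := fun j k =>
  ∑ m ∈ Finset.range (j + k + 1), ∑ n ∈ Finset.range (j + k + 1),
    F m n * fmul (fpow u m) (fpow v n) j k

/-- The Taylor series of `cos`. -/
def cosSeries : OPS := fun n => if n % 2 = 0 then (-1 : ℂ) ^ (n / 2) / (n.factorial : ℂ) else 0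

/-- `(t₁ + t₂)/2` as a two-variable series. -/
def halfSum : FPS := fun j k =>
  if j = 1 ∧ k = 0 then (1 / 2 : ℂ) else if j = 0 ∧ k = 1 then (1 / 2 : ℂ) else 0

/-- `(t₁ − t₂)/2` as a two-variable series. -/
def halfDiff : FPS := fun j k =>
  if j = 1 ∧ k = 0 then (1 / 2 : ℂ) else if j = 0 ∧ k = 1 then (-(1 / 2) : ℂ) else 0

/-- The generating function `S_q(t₁,t₂) = q((t₁+t₂)/2)·cos((t₁−t₂)/2)` as a
formal power series in `t₁, t₂`. -/
def Sq (q : OPS) : FPS := fmul (substOne q halfSum) (substOne cosSeries halfDiff)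

/-- Formal partial derivative with respect to the first variable. -/
def d1 (f : FPS) : FPS := fun j k => ((j + 1 : ℕ) : ℂ) * f (j + 1) k

/-- Formal partial derivative with respect to the second variable. -/
def d2 (f : FPS) : FPS := fun j k => ((k + 1 : ℕ) : ℂ) * f j (k + 1)

/-- `f⁺`, with `(f⁺)_{j,k} = λ^{j−k} f_{j,k}`. -/
def plus (l : ℂ) (f : FPS) : FPS := fun j k => l ^ ((j : ℤ) - (k : ℤ)) * f j k

/-- `f⁻`, with `(f⁻)_{j,k} = λ^{k−j} f_{j,k}`. -/
def minus (l : ℂ) (f : FPS) : FPS := fun j k => l ^ ((k : ℤ) - (j : ℤ)) * f j k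

/-- `∇f = f⁻ − λ⁻¹ f`. -/
def nab (l : ℂ) (f : FPS) : FPS := minus l f - l⁻¹ • f

/-- `∇⁺f = f − λ f⁺`. -/
def nabPlus (l : ℂ) (f : FPS) : FPS := f - l • plus l f

/-- The average `[f] = Σ_j f_{j,j} (z z̄)^j`. -/
def avg (f : FPS) : FPS := fun j k => if j = k then f j k else 0

/-- The projection `Π₊(f) = [z f]/z`. -/
def Pip (f : FPS) : FPS := fun j k => if k = j + 1 then f j k else 0

/-- The projection `Π(f) = [z̄ f]/z̄`. -/
def Pim (f : FPS) : FPS := fun j k => if j = k + 1 then f j k else 0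

/-- `E⁺`, the partial inverse of `∇⁺`. -/
def Eplus (l : ℂ) (f : FPS) : FPS := fun j k =>
  if k = j + 1 then 0 else f j k / (1 - l ^ ((j : ℤ) - (k : ℤ) + 1))

/-- `E`, the partial inverse of `∇`. -/
def Emin (l : ℂ) (f : FPS) : FPS := fun j k =>
  if j = k + 1 then 0 else f j k / (l ^ ((k : ℤ) - (j : ℤ)) - l⁻¹)

/-- `Ẽ`, with `Ẽ(f − f⁺) = f − [f]`. -/
def Etilde (l : ℂ) (f : FPS) : FPS := fun j k =>
  if j = k then 0 else f j k / (1 - l ^ ((j : ℤ) - (k : ℤ)))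

/-- `f ∘ I`, where `I(z,z̄) = (z̄,z)`. -/
def swapI (f : FPS) : FPS := fun j k => f k j

/-- Multiplication by `z`. -/
def mulz (f : FPS) : FPS := fun j k => if j = 0 then 0 else f (j - 1) k

/-- Multiplication by `z̄`. -/
def mulzbar (f : FPS) : FPS := fun j k => if k = 0 then 0 else f j (k - 1)

/-- Division by `z` (valid on series divisible by `z`). -/
def divz (f : FPS) : FPS := fun j k => f (j + 1) k

/-- Multiplicative inverse `1/h` (the geometric-series formula, which is the correct
inverse whenever `h 0 0 ≠ 0`). -/
def finv (h : FPS) : FPS := fun j k =>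
  (h 0 0)⁻¹ * ∑ m ∈ Finset.range (j + k + 1),
    fpow (fun a b => if a = 0 ∧ b = 0 then 0 else -(h a b) * (h 0 0)⁻¹) m j k

/-- Quotient `f/h` of formal power series. -/
def fdiv (f h : FPS) : FPS := fmul f (finv h)

/-- `ℰ(q,φ) = ∂₂S_q(φ⁻,φ) + ∂₁S_q(φ,φ⁺)`. -/
def Err (l : ℂ) (q : OPS) (φ : FPS) : FPS :=
  subst2 (d2 (Sq q)) (minus l φ) φ + subst2 (d1 (Sq q)) φ (plus l φ)

/-- `∂_φℰ(q,φ)(w) = ∂₁₂S_q(φ⁻,φ)w⁻ + ∂₂₂S_q(φ⁻,φ)w + ∂₁₁S_q(φ,φ⁺)w + ∂₁₂S_q(φ,φ⁺)w⁺`. -/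
def dErr (l : ℂ) (q : OPS) (φ : FPS) (w : FPS) : FPS :=
  fmul (subst2 (d1 (d2 (Sq q))) (minus l φ) φ) (minus l w)
    + fmul (subst2 (d2 (d2 (Sq q))) (minus l φ) φ) w
    + fmul (subst2 (d1 (d1 (Sq q))) φ (plus l φ)) w
    + fmul (subst2 (d1 (d2 (Sq q))) φ (plus l φ)) (plus l w)

/-- `h = ∂₁₂S_q(φ⁻,φ)·φ_z·φ_z⁻`. -/
def hFun (l : ℂ) (q : OPS) (φ : FPS) : FPS :=
  fmul (fmul (subst2 (d1 (d2 (Sq q))) (minus l φ) φ) (d1 φ)) (minus l (d1 φ))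

/-- `ψ = −E⁺( ℰ(q,φ)·φ_z − Π₊(ℰ(q,φ)·φ_z) )`. -/
def psiFun (l : ℂ) (q : OPS) (φ : FPS) : FPS :=
  -Eplus l (fmul (Err l q φ) (d1 φ) - Pip (fmul (Err l q φ) (d1 φ)))

/-- `w = φ_z·E( ψ/h − Π(ψ/h) )`. -/
def wFun (l : ℂ) (q : OPS) (φ : FPS) : FPS :=
  fmul (d1 φ)
    (Emin l (fdiv (psiFun l q φ) (hFun l q φ) - Pim (fdiv (psiFun l q φ) (hFun l q φ))))

/-- `κ = ∂₁₂S_q(φ⁻,φ)·(λ⁻¹ φ_z⁻ φ_z̄ − λ φ_z̄⁻ φ_z)`. -/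
def kappaFun (l : ℂ) (q : OPS) (φ : FPS) : FPS :=
  fmul (subst2 (d1 (d2 (Sq q))) (minus l φ) φ)
    (l⁻¹ • fmul (minus l (d1 φ)) (d2 φ) - l • fmul (minus l (d2 φ)) (d1 φ))

/-- `g = φ_z̄ / φ_z`. -/
def gFun (φ : FPS) : FPS := fdiv (d2 φ) (d1 φ)

/-- `R₁ = ( −[z̄·ℰ·φ_z̄] + [z̄·g·[z·ℰ·φ_z]/z] ) / ( λ·z·[κ] )`. -/
def R1Fun (l : ℂ) (q : OPS) (φ : FPS) : FPS :=
  l⁻¹ • fmul (finv (avg (kappaFun l q φ)))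
    (divz (-avg (mulzbar (fmul (Err l q φ) (d2 φ)))
      + avg (mulzbar (fmul (gFun φ) (divz (avg (mulz (fmul (Err l q φ) (d1 φ)))))))))

/-- `R₂ = (1/z)·[ z̄·ψ·(λ⁻¹g − λg⁻)·([κ]−κ)/(κ·[κ]) ]`. -/
def R2Fun (l : ℂ) (q : OPS) (φ : FPS) : FPS :=
  divz (avg (mulzbar
    (fmul (fmul (psiFun l q φ) (l⁻¹ • gFun φ - l • minus l (gFun φ)))
      (fmul (avg (kappaFun l q φ) - kappaFun l q φ)
        (finv (fmul (kappaFun l q φ) (avg (kappaFun l q φ))))))))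

/-- `R₃ = [z·∂_z(S_q(φ⁻,φ))]/z − ∇⁺( h·Π(ψ/h) )`. -/
def R3Fun (l : ℂ) (q : OPS) (φ : FPS) : FPS :=
  Pip (d1 (subst2 (Sq q) (minus l φ) φ))
    - nabPlus l (fmul (hFun l q φ) (Pim (fdiv (psiFun l q φ) (hFun l q φ))))

/-- `R₄ = ∂_z(ℰ(q,φ))·(w/φ_z) + R₃/φ_z`. -/
def R4Fun (l : ℂ) (q : OPS) (φ : FPS) : FPS :=
  fmul (d1 (Err l q φ)) (fdiv (wFun l q φ) (d1 φ)) + fdiv (R3Fun l q φ) (d1 φ)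

/-- `φ = z + z̄ + O₃`. -/
def normalized (φ : FPS) : Prop :=
  φ 0 0 = 0 ∧ φ 1 0 = 1 ∧ φ 0 1 = 1 ∧ φ 2 0 = 0 ∧ φ 1 1 = 0 ∧ φ 0 2 = 0

/-- The weighted norm `‖f‖_ρ = Σ_{j,k} |f_{j,k}| ρ^{j+k} ∈ [0,∞]`. -/
def wnorm (ρ : ℝ) (f : FPS) : ENNReal :=
  ∑' p : ℕ × ℕ, ENNReal.ofReal (‖f p.1 p.2‖ * ρ ^ (p.1 + p.2))

/-- `D(f) = Σ_{n≥1} n f_n (z z̄)^n` for a series in `z z̄`. -/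
def Dop (f : FPS) : FPS := fun j k => if j = k then (j : ℂ) * f j k else 0

/-- `D̄(f − f₀) = Σ_{n≥1} (f_n/n) (z z̄)^n` for a series in `z z̄`. -/
def Dbar (f : FPS) : FPS := fun j k => if j = k ∧ j ≠ 0 then f j k / (j : ℂ) else 0

/-- The constant part `f₀` of a series. -/
def constPart (f : FPS) : FPS := fun j k => if j = 0 ∧ k = 0 then f 0 0 else 0

/-- `ξ₀ = ((λ⁻¹+1)z + (λ+1)z̄)/2`. -/
def xi0 (l : ℂ) : FPS := fun a b =>
  if a = 1 ∧ b = 0 then (l⁻¹ + 1) / 2 else if a = 0 ∧ b = 1 then (l + 1) / 2 else 0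

section AuxProofs

variable {l : ℂ} {φ : FPS}

def toPS (f : FPS) : PowerSeries (PowerSeries ℂ) :=
  PowerSeries.mk fun j => PowerSeries.mk fun k => f j k

lemma toPS_injective : Function.Injective toPS := by
  intro f g h
  funext j k
  have := congrArg (fun F => PowerSeries.coeff k (PowerSeries.coeff j F)) h
  simpa [toPS] using this

lemma toPS_add (f g : FPS) : toPS (f + g) = toPS f + toPS g := by
  ext j k
  simp [toPS]

lemma toPS_fmul (f g : FPS) : toPS (fmul f g) = toPS f * toPS g := by
  ext j k
  rw [PowerSeries.coeff_mul, map_sum]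
  rw [Finset.Nat.sum_antidiagonal_eq_sum_range_succ_mk]
  simp only [toPS, PowerSeries.coeff_mk, PowerSeries.coeff_mul, fmul]
  refine Finset.sum_congr rfl fun a _ => ?_
  rw [Finset.Nat.sum_antidiagonal_eq_sum_range_succ_mk]

lemma toPS_oneF : toPS oneF = 1 := by
  ext j k
  simp only [toPS, PowerSeries.coeff_mk, oneF, PowerSeries.coeff_one]
  rcases Nat.eq_zero_or_pos j with rfl | hj
  · rcases Nat.eq_zero_or_pos k with rfl | hk
    · simp
    · simp [Nat.pos_iff_ne_zero.1 hk]
  · simp [Nat.pos_iff_ne_zero.1 hj]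

lemma fmul_comm' (f g : FPS) : fmul f g = fmul g f :=
  toPS_injective (by rw [toPS_fmul, toPS_fmul, mul_comm])

lemma fmul_assoc' (f g h : FPS) : fmul (fmul f g) h = fmul f (fmul g h) :=
  toPS_injective (by rw [toPS_fmul, toPS_fmul, toPS_fmul, toPS_fmul, mul_assoc])

lemma oneF_fmul (f : FPS) : fmul oneF f = f :=
  toPS_injective (by rw [toPS_fmul, toPS_oneF, one_mul])

lemma fmul_oneF (f : FPS) : fmul f oneF = f :=
  toPS_injective (by rw [toPS_fmul, toPS_oneF, mul_one])

lemma fmul_add' (f g h : FPS) : fmul f (g + h) = fmul f g + fmul f h := by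
  funext j k
  simp [fmul, mul_add, Finset.sum_add_distrib]

lemma add_fmul' (f g h : FPS) : fmul (f + g) h = fmul f h + fmul g h := by
  funext j k
  simp [fmul, add_mul, Finset.sum_add_distrib]

lemma fmul_smul' (c : ℂ) (f g : FPS) : fmul f (c • g) = c • fmul f g := by
  funext j k
  simp only [fmul, Pi.smul_apply, smul_eq_mul, Finset.mul_sum]
  exact Finset.sum_congr rfl fun a _ => Finset.sum_congr rfl fun b _ => by ring

lemma fmul_zero' (f : FPS) : fmul f 0 = 0 := by
  funext j k; simp [fmul]

lemma toPS_d1 (f : FPS) : toPS (d1 f) = PowerSeries.derivativeFun (toPS f) := by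
  ext j k
  change _ = PowerSeries.coeff k (PowerSeries.coeff j (PowerSeries.derivative _ (toPS f)))
  rw [PowerSeries.coeff_derivativeFun]
  have h1 : ((j : PowerSeries ℂ) + 1) = PowerSeries.C ((j : ℂ) + 1) := by
    rw [map_add, map_natCast, map_one]
  rw [h1, PowerSeries.coeff_mul_C]
  simp only [toPS, PowerSeries.coeff_mk, d1]
  push_cast
  ring

lemma d1_fmul (f g : FPS) : d1 (fmul f g) = fmul f (d1 g) + fmul g (d1 f) := by
  apply toPS_injective
  rw [toPS_add, toPS_d1, toPS_fmul, toPS_fmul, toPS_fmul, toPS_d1, toPS_d1,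
    PowerSeries.derivativeFun_mul, smul_eq_mul, smul_eq_mul]

lemma d1_oneF : d1 oneF = 0 := by
  funext j k
  simp [d1, oneF]

lemma d1_fpow (u : FPS) (m : ℕ) :
    d1 (fpow u m) = (m : ℂ) • fmul (fpow u (m - 1)) (d1 u) := by
  induction m with
  | zero =>
    rw [Nat.cast_zero, zero_smul]
    exact d1_oneF
  | succ m ih =>
    show d1 (fmul u (fpow u m)) = _
    rw [d1_fmul, ih, fmul_smul', Nat.add_sub_cancel]
    rcases Nat.eq_zero_or_pos m with rfl | hm
    · rw [Nat.cast_zero, zero_smul, zero_add]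
      norm_num
    · obtain ⟨m', rfl⟩ := Nat.exists_eq_succ_of_ne_zero (Nat.pos_iff_ne_zero.1 hm)
      have hre : fmul u (fmul (fpow u (m' + 1 - 1)) (d1 u))
          = fmul (fpow u (m' + 1)) (d1 u) := by
        rw [Nat.add_sub_cancel, ← fmul_assoc']
        rfl
      rw [hre]
      have hc : ((m' + 1 + 1 : ℕ) : ℂ) = ((m' + 1 : ℕ) : ℂ) + 1 := by push_cast; ring
      rw [hc, add_smul, one_smul]

lemma fpow_eq_zero_of_lt {u : FPS} (hu : u 0 0 = 0) :
    ∀ m j k, j + k < m → fpow u m j k = 0 := by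
  intro m
  induction m with
  | zero => intro j k h; exact absurd h (Nat.not_lt_zero _)
  | succ m ih =>
    intro j k h
    show fmul u (fpow u m) j k = 0
    refine Finset.sum_eq_zero fun a ha => Finset.sum_eq_zero fun b hb => ?_
    rw [Finset.mem_range] at ha hb
    by_cases h0 : a = 0 ∧ b = 0
    · obtain ⟨rfl, rfl⟩ := h0
      rw [hu, zero_mul]
    · rw [ih (j - a) (k - b) (by omega), mul_zero]

lemma pow_pow_eq_zero {u v : FPS} (hu : u 0 0 = 0) (hv : v 0 0 = 0) (m n j k : ℕ)
    (h : j + k < m + n) : fmul (fpow u m) (fpow v n) j k = 0 := by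
  refine Finset.sum_eq_zero fun a ha => Finset.sum_eq_zero fun b hb => ?_
  rw [Finset.mem_range] at ha hb
  by_cases hab : a + b < m
  · rw [fpow_eq_zero_of_lt hu m a b hab, zero_mul]
  · rw [fpow_eq_zero_of_lt hv n (j - a) (k - b) (by omega), mul_zero]

lemma fmul_pow_pow_eq_zero {u v : FPS} (hu : u 0 0 = 0) (hv : v 0 0 = 0)
    (w : FPS) (m n j k : ℕ) (h : j + k < m + n) :
    fmul (fmul (fpow u m) (fpow v n)) w j k = 0 := by
  refine Finset.sum_eq_zero fun a ha => Finset.sum_eq_zero fun b hb => ?_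
  rw [Finset.mem_range] at ha hb
  rw [pow_pow_eq_zero hu hv m n a b (by omega), zero_mul]

lemma subst2_ext {u v : FPS} (hu : u 0 0 = 0) (hv : v 0 0 = 0) (G : FPS) (j k M : ℕ)
    (hM : j + k + 1 ≤ M) :
    subst2 G u v j k = ∑ m ∈ Finset.range M, ∑ n ∈ Finset.range M,
      G m n * fmul (fpow u m) (fpow v n) j k := by
  rw [subst2, ← Finset.sum_product', ← Finset.sum_product']
  apply Finset.sum_subset
  · exact Finset.product_subset_product (Finset.range_subset_range.2 hM) (Finset.range_subset_range.2 hM)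
  · intro p hp hnp
    simp only [Finset.mem_product, Finset.mem_range] at hp hnp
    rw [pow_pow_eq_zero hu hv p.1 p.2 j k (by omega), mul_zero]

lemma sum_swap4 {s t S T : Finset ℕ} (g : ℕ → ℕ → ℕ → ℕ → ℂ) :
    (∑ a ∈ s, ∑ b ∈ t, ∑ m ∈ S, ∑ n ∈ T, g a b m n)
      = ∑ m ∈ S, ∑ n ∈ T, ∑ a ∈ s, ∑ b ∈ t, g a b m n :=
  calc (∑ a ∈ s, ∑ b ∈ t, ∑ m ∈ S, ∑ n ∈ T, g a b m n)
      = ∑ a ∈ s, ∑ m ∈ S, ∑ b ∈ t, ∑ n ∈ T, g a b m n :=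
        Finset.sum_congr rfl fun a _ => Finset.sum_comm
    _ = ∑ m ∈ S, ∑ a ∈ s, ∑ b ∈ t, ∑ n ∈ T, g a b m n := Finset.sum_comm
    _ = ∑ m ∈ S, ∑ a ∈ s, ∑ n ∈ T, ∑ b ∈ t, g a b m n :=
        Finset.sum_congr rfl fun m _ => Finset.sum_congr rfl fun a _ => Finset.sum_comm
    _ = ∑ m ∈ S, ∑ n ∈ T, ∑ a ∈ s, ∑ b ∈ t, g a b m n :=
        Finset.sum_congr rfl fun m _ => Finset.sum_comm

lemma fmul_subst2_aux {u v : FPS} (hu : u 0 0 = 0) (hv : v 0 0 = 0) (H w : FPS) (j k : ℕ) :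
    fmul (subst2 H u v) w j k
      = ∑ m ∈ Finset.range (j + k + 2), ∑ n ∈ Finset.range (j + k + 2),
          H m n * fmul (fmul (fpow u m) (fpow v n)) w j k := by
  have step1 : fmul (subst2 H u v) w j k
      = ∑ a ∈ Finset.range (j + 1), ∑ b ∈ Finset.range (k + 1),
          ∑ m ∈ Finset.range (j + k + 2), ∑ n ∈ Finset.range (j + k + 2),
            H m n * (fmul (fpow u m) (fpow v n) a b * w (j - a) (k - b)) := by
    rw [show fmul (subst2 H u v) w j k = ∑ a ∈ Finset.range (j + 1), ∑ b ∈ Finset.range (k + 1),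
      subst2 H u v a b * w (j - a) (k - b) from rfl]
    refine Finset.sum_congr rfl fun a ha => Finset.sum_congr rfl fun b hb => ?_
    rw [Finset.mem_range] at ha hb
    rw [show subst2 H u v a b = _ from subst2_ext hu hv H a b (j + k + 2) (by omega),
      Finset.sum_mul]
    refine Finset.sum_congr rfl fun m _ => ?_
    rw [Finset.sum_mul]
    exact Finset.sum_congr rfl fun n _ => by ring
  rw [step1, sum_swap4]
  refine Finset.sum_congr rfl fun m _ => Finset.sum_congr rfl fun n _ => ?_
  simp only [← Finset.mul_sum]
  rfl

lemma reindex1 {u v : FPS} (hu : u 0 0 = 0) (hv : v 0 0 = 0) (G w : FPS) (j k : ℕ) :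
    (∑ m ∈ Finset.range (j + k + 2), ∑ n ∈ Finset.range (j + k + 2),
      d1 G m n * fmul (fmul (fpow u m) (fpow v n)) w j k)
    = ∑ m ∈ Finset.range (j + k + 2), ∑ n ∈ Finset.range (j + k + 2),
        G m n * ((m : ℂ) * fmul (fmul (fpow u (m - 1)) (fpow v n)) w j k) := by
  rw [Finset.sum_comm]
  conv_rhs => rw [Finset.sum_comm]
  refine Finset.sum_congr rfl fun n _ => ?_
  have hsplit : j + k + 2 = (j + k + 1) + 1 := rfl
  conv_lhs => rw [hsplit, Finset.sum_range_succ]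
  conv_rhs => rw [hsplit, Finset.sum_range_succ']
  rw [fmul_pow_pow_eq_zero hu hv w (j + k + 1) n j k (by omega), mul_zero, add_zero]
  rw [Nat.cast_zero, zero_mul, mul_zero, add_zero]
  refine Finset.sum_congr rfl fun m _ => ?_
  simp only [d1, Nat.add_sub_cancel]
  ring

lemma reindex2 {u v : FPS} (hu : u 0 0 = 0) (hv : v 0 0 = 0) (G w : FPS) (j k : ℕ) :
    (∑ m ∈ Finset.range (j + k + 2), ∑ n ∈ Finset.range (j + k + 2),
      d2 G m n * fmul (fmul (fpow u m) (fpow v n)) w j k)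
    = ∑ m ∈ Finset.range (j + k + 2), ∑ n ∈ Finset.range (j + k + 2),
        G m n * ((n : ℂ) * fmul (fmul (fpow u m) (fpow v (n - 1))) w j k) := by
  refine Finset.sum_congr rfl fun m _ => ?_
  have hsplit : j + k + 2 = (j + k + 1) + 1 := rfl
  conv_lhs => rw [hsplit, Finset.sum_range_succ]
  conv_rhs => rw [hsplit, Finset.sum_range_succ']
  rw [fmul_pow_pow_eq_zero hu hv w m (j + k + 1) j k (by omega), mul_zero, add_zero]
  rw [Nat.cast_zero, zero_mul, mul_zero, add_zero]
  refine Finset.sum_congr rfl fun n _ => ?_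
  simp only [d2, Nat.add_sub_cancel]
  ring

lemma d1_subst2 {u v : FPS} (hu : u 0 0 = 0) (hv : v 0 0 = 0) (G : FPS) :
    d1 (subst2 G u v) =
      fmul (subst2 (d1 G) u v) (d1 u) + fmul (subst2 (d2 G) u v) (d1 v) := by
  funext j k
  simp only [Pi.add_apply]
  rw [fmul_subst2_aux hu hv (d1 G) (d1 u) j k,
    fmul_subst2_aux hu hv (d2 G) (d1 v) j k, reindex1 hu hv G (d1 u) j k,
    reindex2 hu hv G (d1 v) j k, ← Finset.sum_add_distrib]
  have h0 : d1 (subst2 G u v) j k = ((j + 1 : ℕ) : ℂ) * subst2 G u v (j + 1) k := rfl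
  rw [h0, subst2_ext hu hv G (j + 1) k (j + k + 2) (by omega), Finset.mul_sum]
  refine Finset.sum_congr rfl fun m _ => ?_
  rw [Finset.mul_sum, ← Finset.sum_add_distrib]
  refine Finset.sum_congr rfl fun n _ => ?_
  have hpp : d1 (fmul (fpow u m) (fpow v n)) j k
      = (m : ℂ) * fmul (fmul (fpow u (m - 1)) (fpow v n)) (d1 u) j k
        + (n : ℂ) * fmul (fmul (fpow u m) (fpow v (n - 1))) (d1 v) j k := by
    have e1 : fmul (fpow u m) (fmul (fpow v (n - 1)) (d1 v))
        = fmul (fmul (fpow u m) (fpow v (n - 1))) (d1 v) := (fmul_assoc' _ _ _).symm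
    have e2 : fmul (fpow v n) (fmul (fpow u (m - 1)) (d1 u))
        = fmul (fmul (fpow u (m - 1)) (fpow v n)) (d1 u) := by
      rw [← fmul_assoc', fmul_comm' (fpow v n) (fpow u (m - 1))]
    rw [d1_fmul, d1_fpow, d1_fpow, fmul_smul', fmul_smul', e1, e2]
    simp only [Pi.add_apply, Pi.smul_apply, smul_eq_mul]
    ring
  have hd : ((j + 1 : ℕ) : ℂ) * (fmul (fpow u m) (fpow v n)) (j + 1) k
      = d1 (fmul (fpow u m) (fpow v n)) j k := rfl
  calc ((j + 1 : ℕ) : ℂ) * (G m n * fmul (fpow u m) (fpow v n) (j + 1) k)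
      = G m n * (((j + 1 : ℕ) : ℂ) * fmul (fpow u m) (fpow v n) (j + 1) k) := by ring
    _ = G m n * ((m : ℂ) * fmul (fmul (fpow u (m - 1)) (fpow v n)) (d1 u) j k
        + (n : ℂ) * fmul (fmul (fpow u m) (fpow v (n - 1))) (d1 v) j k) := by rw [hd, hpp]
    _ = _ := by ring

lemma minus_fmul (hl : l ≠ 0) (f g : FPS) :
    minus l (fmul f g) = fmul (minus l f) (minus l g) := by
  funext j k
  simp only [minus, fmul, Finset.mul_sum]
  refine Finset.sum_congr rfl fun a ha => Finset.sum_congr rfl fun b hb => ?_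
  rw [Finset.mem_range] at ha hb
  have h1 : ((j - a : ℕ) : ℤ) = (j : ℤ) - a := by omega
  have h2 : ((k - b : ℕ) : ℤ) = (k : ℤ) - b := by omega
  rw [h1, h2]
  have h3 : (k : ℤ) - j = ((b : ℤ) - a) + (((k : ℤ) - b) - ((j : ℤ) - a)) := by ring
  rw [h3, zpow_add₀ hl]
  ring

lemma minus_oneF : minus l oneF = oneF := by
  funext j k
  simp only [minus, oneF]
  split_ifs with h
  · obtain ⟨rfl, rfl⟩ := h
    simp
  · rw [mul_zero]

lemma minus_fpow (hl : l ≠ 0) (u : FPS) (m : ℕ) :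
    minus l (fpow u m) = fpow (minus l u) m := by
  induction m with
  | zero => exact minus_oneF
  | succ m ih =>
    show minus l (fmul u (fpow u m)) = fmul (minus l u) (fpow (minus l u) m)
    rw [minus_fmul hl, ih]

lemma minus_subst2 (hl : l ≠ 0) (G u v : FPS) :
    minus l (subst2 G u v) = subst2 G (minus l u) (minus l v) := by
  funext j k
  simp only [minus, subst2, Finset.mul_sum]
  refine Finset.sum_congr rfl fun m _ => Finset.sum_congr rfl fun n _ => ?_
  rw [← minus_fpow hl, ← minus_fpow hl, ← minus_fmul hl]
  simp only [minus]
  ring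

lemma minus_plus (hl : l ≠ 0) (f : FPS) : minus l (plus l f) = f := by
  funext j k
  simp only [minus, plus, ← mul_assoc, ← zpow_add₀ hl]
  have : (k : ℤ) - j + ((j : ℤ) - k) = 0 := by ring
  rw [this, zpow_zero, one_mul]

lemma d1_minus (hl : l ≠ 0) (f : FPS) : d1 (minus l f) = l⁻¹ • minus l (d1 f) := by
  funext j k
  simp only [d1, minus, Pi.smul_apply, smul_eq_mul]
  have h1 : (k : ℤ) - ((j + 1 : ℕ) : ℤ) = ((k : ℤ) - j) + (-1) := by push_cast; ring
  rw [h1, zpow_add₀ hl, zpow_neg_one]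
  ring

lemma d2_minus (hl : l ≠ 0) (f : FPS) : d2 (minus l f) = l • minus l (d2 f) := by
  funext j k
  simp only [d2, minus, Pi.smul_apply, smul_eq_mul]
  have h1 : ((k + 1 : ℕ) : ℤ) - (j : ℤ) = ((k : ℤ) - j) + 1 := by push_cast; ring
  rw [h1, zpow_add₀ hl, zpow_one]
  ring

lemma swapI_fmul (f g : FPS) : swapI (fmul f g) = fmul (swapI f) (swapI g) := by
  funext j k
  show fmul f g k j = _
  rw [show fmul f g k j = ∑ a ∈ Finset.range (k + 1), ∑ b ∈ Finset.range (j + 1),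
    f a b * g (k - a) (j - b) from rfl, Finset.sum_comm]
  rfl

lemma swapI_oneF : swapI oneF = oneF := by
  funext j k
  simp only [swapI, oneF]
  by_cases h : j = 0 ∧ k = 0
  · obtain ⟨rfl, rfl⟩ := h; rfl
  · rw [if_neg (by tauto), if_neg (by tauto)]

lemma swapI_fpow (u : FPS) (m : ℕ) : swapI (fpow u m) = fpow (swapI u) m := by
  induction m with
  | zero => exact swapI_oneF
  | succ m ih =>
    show swapI (fmul u (fpow u m)) = fmul (swapI u) (fpow (swapI u) m)
    rw [swapI_fmul, ih]

lemma swapI_subst2 (G u v : FPS) :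
    swapI (subst2 G u v) = subst2 G (swapI u) (swapI v) := by
  funext j k
  show subst2 G u v k j = _
  rw [subst2, subst2]
  rw [show k + j + 1 = j + k + 1 from by omega]
  refine Finset.sum_congr rfl fun m _ => Finset.sum_congr rfl fun n _ => ?_
  rw [← swapI_fpow, ← swapI_fpow, ← swapI_fmul]
  rfl

lemma swapI_swapI (f : FPS) : swapI (swapI f) = f := rfl

lemma d2_eq_swap (f : FPS) : d2 f = swapI (d1 (swapI f)) := rfl

lemma swapI_add (f g : FPS) : swapI (f + g) = swapI f + swapI g := rfl

lemma d2_subst2 {u v : FPS} (hu : u 0 0 = 0) (hv : v 0 0 = 0) (G : FPS) :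
    d2 (subst2 G u v) =
      fmul (subst2 (d1 G) u v) (d2 u) + fmul (subst2 (d2 G) u v) (d2 v) := by
  rw [d2_eq_swap, swapI_subst2, d1_subst2 (u := swapI u) (v := swapI v) hu hv G, swapI_add, swapI_fmul, swapI_fmul,
    swapI_subst2, swapI_subst2, swapI_swapI, swapI_swapI, ← d2_eq_swap, ← d2_eq_swap]

lemma key1 (hl : l ≠ 0) (hφ0 : φ 0 0 = 0) (q : OPS) :
    d1 (subst2 (Sq q) (minus l φ) φ)
      = fmul (subst2 (d2 (Sq q)) (minus l φ) φ) (d1 φ)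
        + l⁻¹ • minus l (fmul (subst2 (d1 (Sq q)) φ (plus l φ)) (d1 φ)) := by
  have hm0 : (minus l φ) 0 0 = 0 := by simp [minus, hφ0]
  have h1 : subst2 (d1 (Sq q)) (minus l φ) φ
      = minus l (subst2 (d1 (Sq q)) φ (plus l φ)) := by
    rw [minus_subst2 hl, minus_plus hl]
  rw [d1_subst2 hm0 hφ0, add_comm, h1, d1_minus hl, fmul_smul', ← minus_fmul hl]

lemma key2 (hl : l ≠ 0) (hφ0 : φ 0 0 = 0) (q : OPS) :
    d2 (subst2 (Sq q) (minus l φ) φ)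
      = fmul (subst2 (d2 (Sq q)) (minus l φ) φ) (d2 φ)
        + l • minus l (fmul (subst2 (d1 (Sq q)) φ (plus l φ)) (d2 φ)) := by
  have hm0 : (minus l φ) 0 0 = 0 := by simp [minus, hφ0]
  have h1 : subst2 (d1 (Sq q)) (minus l φ) φ
      = minus l (subst2 (d1 (Sq q)) φ (plus l φ)) := by
    rw [minus_subst2 hl, minus_plus hl]
  rw [d2_subst2 hm0 hφ0, add_comm, h1, d2_minus hl, fmul_smul', ← minus_fmul hl]

lemma T1 (hl : l ≠ 0) (hφ0 : φ 0 0 = 0) (q : OPS) (j : ℕ) :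
    fmul (Err l q φ) (d1 φ) j (j + 1)
      = ((j + 1 : ℕ) : ℂ) * subst2 (Sq q) (minus l φ) φ (j + 1) (j + 1) := by
  have hk := congrFun (congrFun (key1 hl hφ0 q) j) (j + 1)
  have h2 : (l⁻¹ • minus l (fmul (subst2 (d1 (Sq q)) φ (plus l φ)) (d1 φ))) j (j + 1)
      = fmul (subst2 (d1 (Sq q)) φ (plus l φ)) (d1 φ) j (j + 1) := by
    simp only [Pi.smul_apply, smul_eq_mul, minus]
    have h3 : ((j + 1 : ℕ) : ℤ) - (j : ℤ) = 1 := by push_cast; ring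
    rw [h3, zpow_one, ← mul_assoc, inv_mul_cancel₀ hl, one_mul]
  simp only [Pi.add_apply] at hk
  rw [h2] at hk
  have h4 : d1 (subst2 (Sq q) (minus l φ) φ) j (j + 1)
      = ((j + 1 : ℕ) : ℂ) * subst2 (Sq q) (minus l φ) φ (j + 1) (j + 1) := rfl
  rw [h4] at hk
  rw [Err, add_fmul']
  simp only [Pi.add_apply]
  exact hk.symm

lemma T2 (hl : l ≠ 0) (hφ0 : φ 0 0 = 0) (q : OPS) (j : ℕ) :
    fmul (Err l q φ) (d2 φ) (j + 1) j
      = ((j + 1 : ℕ) : ℂ) * subst2 (Sq q) (minus l φ) φ (j + 1) (j + 1) := by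
  have hk := congrFun (congrFun (key2 hl hφ0 q) (j + 1)) j
  have h2 : (l • minus l (fmul (subst2 (d1 (Sq q)) φ (plus l φ)) (d2 φ))) (j + 1) j
      = fmul (subst2 (d1 (Sq q)) φ (plus l φ)) (d2 φ) (j + 1) j := by
    simp only [Pi.smul_apply, smul_eq_mul, minus]
    have h3 : (j : ℤ) - ((j + 1 : ℕ) : ℤ) = -1 := by push_cast; ring
    rw [h3, zpow_neg_one, ← mul_assoc, mul_inv_cancel₀ hl, one_mul]
  simp only [Pi.add_apply] at hk
  rw [h2] at hk
  have h4 : d2 (subst2 (Sq q) (minus l φ) φ) (j + 1) j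
      = ((j + 1 : ℕ) : ℂ) * subst2 (Sq q) (minus l φ) φ (j + 1) (j + 1) := rfl
  rw [h4] at hk
  rw [Err, add_fmul']
  simp only [Pi.add_apply]
  exact hk.symm

lemma F00 (q : OPS) (hq0 : q 0 = 1) (u v : FPS) : subst2 (Sq q) u v 0 0 = 1 := by
  have h1 : subst2 (Sq q) u v 0 0 = Sq q 0 0 * fmul (fpow u 0) (fpow v 0) 0 0 := by
    simp [subst2]
  have h2 : fmul (fpow u 0) (fpow v 0) 0 0 = 1 := by
    show fmul oneF oneF 0 0 = 1
    simp [fmul, Finset.sum_range_one, oneF]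
    decide
  have h3 : Sq q 0 0 = 1 := by
    show fmul (substOne q halfSum) (substOne cosSeries halfDiff) 0 0 = 1
    have hA : substOne q halfSum 0 0 = 1 := by
      simp [substOne, fpow, oneF, hq0]
    have hB : substOne cosSeries halfDiff 0 0 = 1 := by
      simp [substOne, fpow, oneF, cosSeries]
    simp [fmul, hA, hB]
  rw [h1, h2, h3, one_mul]

end AuxProofs

/-- For `q` with `q(0) = 1` and `φ` normalized and symmetric, the following
are equivalent: `Π₊(ℰ(q,φ)·φ_z) = 0`, `[S_q(φ⁻,φ)] = 1`, `Π(ℰ(q,φ)·φ_z̄) = 0`. -/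
theorem zero_mean_equivalence
    (l : ℂ) (hl : ‖l‖ = 1) (hru : ∀ n : ℕ, 0 < n → l ^ n ≠ 1)
    (q : OPS) (hq0 : q 0 = 1) (φ : FPS) (hφ : normalized φ) (hsym : swapI φ = φ) :
    (Pip (fmul (Err l q φ) (d1 φ)) = 0 ↔ avg (subst2 (Sq q) (minus l φ) φ) = oneF) ∧
    (avg (subst2 (Sq q) (minus l φ) φ) = oneF ↔ Pim (fmul (Err l q φ) (d2 φ)) = 0) := by
  have hl0 : l ≠ 0 := by
    intro h
    rw [h] at hl
    simp at hl
  have hφ0 : φ 0 0 = 0 := hφ.1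
  have hF00 : subst2 (Sq q) (minus l φ) φ 0 0 = 1 := F00 q hq0 _ _
  have hdiag : (avg (subst2 (Sq q) (minus l φ) φ) = oneF)
      ↔ ∀ n : ℕ, subst2 (Sq q) (minus l φ) φ (n + 1) (n + 1) = 0 := by
    constructor
    · intro h n
      have := congrFun (congrFun h (n + 1)) (n + 1)
      simpa [avg, oneF] using this
    · intro h
      funext j k
      by_cases hjk : j = k
      · subst hjk
        cases j with
        | zero => simp [avg, oneF, hF00]
        | succ n => simp [avg, oneF, h n]
      · have hno : ¬(j = 0 ∧ k = 0) := fun hc => hjk (hc.1.trans hc.2.symm)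
        simp [avg, oneF, hjk, hno]
  have hcast : ∀ n : ℕ, ((n + 1 : ℕ) : ℂ) ≠ 0 := fun n => Nat.cast_ne_zero.2 (Nat.succ_ne_zero n)
  constructor
  · constructor
    · intro h
      rw [hdiag]
      intro n
      have h1 := congrFun (congrFun h n) (n + 1)
      simp only [Pip, if_pos rfl, Pi.zero_apply] at h1
      rw [T1 hl0 hφ0 q n] at h1
      exact (mul_eq_zero.1 h1).resolve_left (hcast n)
    · intro h
      rw [hdiag] at h
      funext j k
      simp only [Pip, Pi.zero_apply]
      split_ifs with hk
      · subst hk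
        rw [T1 hl0 hφ0 q j, h j, mul_zero]
      · rfl
  · constructor
    · intro h
      rw [hdiag] at h
      funext j k
      simp only [Pim, Pi.zero_apply]
      split_ifs with hj
      · subst hj
        rw [T2 hl0 hφ0 q k, h k, mul_zero]
      · rfl
    · intro h
      rw [hdiag]
      intro n
      have h1 := congrFun (congrFun h (n + 1)) n
      simp only [Pim, if_pos rfl, Pi.zero_apply] at h1
      rw [T2 hl0 hφ0 q n] at h1
      exact (mul_eq_zero.1 h1).resolve_left (hcast n)


end Treschev

end
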